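/- Let a(x₁,x₂) = (1+x₁)⁻²(1+x₂)⁻² on (0,∞)², Mᵉ = {x ∈ (0,∞)² : x₂ ≤ ε·x₁}, and K = [0,C]² for a fixed C > 0. Then for 0 < ε < 1, the ratio (∫_{Mᵉ ∩ Kᶜ} a dx)/(∫_{Mᵉ} a dx) = [1 − ε − (1+C)·log((1+Cε)/(ε+Cε))] / [(1+C)(1 − ε + log ε)], and this ratio tends to 1 as ε ↓ 0. Consequently, the family of normalized restrictions Pᵉ of a to Mᵉ is not tight. -/

import Mathlib

open MeasureTheory Real Set Filter
open scoped Topology ENNReal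

/-- The Pareto(1) × Pareto(1) ambient density a(x₁,x₂) = (1+x₁)⁻²(1+x₂)⁻². -/
noncomputable def paretoDensity (x : ℝ × ℝ) : ℝ := (1 + x.1)⁻¹ ^ 2 * (1 + x.2)⁻¹ ^ 2

/-- The sublevel set Mᵉ = {(x₁,x₂) ∈ (0,∞)² : x₂ ≤ ε·x₁}. -/
def coneSublevel (ε : ℝ) : Set (ℝ × ℝ) :=
  {x : ℝ × ℝ | 0 < x.1 ∧ 0 < x.2 ∧ x.2 ≤ ε * x.1}

/-- The normalized restriction Pᵉ of the density a to Mᵉ. -/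
noncomputable def Pcone (ε : ℝ) : Measure (ℝ × ℝ) :=
  (∫⁻ x in coneSublevel ε, ENNReal.ofReal (paretoDensity x))⁻¹ •
    ((volume : Measure (ℝ × ℝ)).restrict (coneSublevel ε)).withDensity
      (fun x => ENNReal.ofReal (paretoDensity x))

/-! ### Auxiliary 1-dimensional computations -/

lemma hd_inv (y : ℝ) (hy : (1:ℝ) + y ≠ 0) :
    HasDerivAt (fun t : ℝ => -(1+t)⁻¹) ((1+y)⁻¹ ^ 2) y := by
  have h : HasDerivAt (fun t : ℝ => (1+t)⁻¹) (-1 / (1+y)^2) y := by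
    exact ((hasDerivAt_id' y).const_add 1).inv hy
  have : HasDerivAt (fun t : ℝ => -(1+t)⁻¹) _ y := h.neg
  convert this using 1
  field_simp

lemma aux_inner (b : ℝ) (hb : 0 < b) :
    ∫ y in Ioc (0:ℝ) b, (1+y)⁻¹ ^ 2 = 1 - (1+b)⁻¹ := by
  rw [← intervalIntegral.integral_of_le hb.le]
  have h := intervalIntegral.integral_eq_sub_of_hasDerivAt
    (f := fun t : ℝ => -(1+t)⁻¹) (f' := fun t : ℝ => (1+t)⁻¹ ^ 2)
    (a := 0) (b := b) ?_ ?_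
  · rw [h]; ring_nf
  · intro x hx
    rw [uIcc_of_le hb.le] at hx
    exact hd_inv x (by nlinarith [hx.1])
  · apply ContinuousOn.intervalIntegrable
    apply ContinuousOn.pow
    apply ContinuousOn.inv₀ (by fun_prop)
    intro x hx
    rw [uIcc_of_le hb.le] at hx
    nlinarith [hx.1]

lemma integrableOn_inv_sq : IntegrableOn (fun x : ℝ => (1+x)⁻¹ ^ 2) (Ioi 0) := by
  apply integrableOn_Ioi_deriv_of_nonneg' (g := fun t : ℝ => -(1+t)⁻¹) (l := 0)
  · intro x hx
    exact hd_inv x (by simp at hx; nlinarith)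
  · intro x _; positivity
  · rw [show (0:ℝ) = -0 by norm_num]
    apply Tendsto.neg
    apply Tendsto.comp tendsto_inv_atTop_zero
    exact tendsto_atTop_add_const_left _ 1 tendsto_id

lemma hd_G (ε c x : ℝ) (hε : 0 < ε) (hε1 : ε < 1) (hc : 0 ≤ c) (hx : x ∈ Ici c) :
    HasDerivAt (fun t : ℝ => ε/(1-ε)^2 * (Real.log (1+t) - Real.log (1+ε*t))
        + ε/(1-ε) * (1+t)⁻¹)
      ((1+x)⁻¹ ^ 2 * (1 - (1+ε*x)⁻¹)) x := by
  have hx0 : 0 ≤ x := le_trans hc hx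
  have h1 : (0:ℝ) < 1 + x := by linarith
  have h2 : (0:ℝ) < 1 + ε * x := by nlinarith
  have d1 : HasDerivAt (fun t : ℝ => Real.log (1+t)) (1 / (1+x)) x := by
    simpa using ((hasDerivAt_id x).const_add 1).log h1.ne'
  have d2 : HasDerivAt (fun t : ℝ => Real.log (1+ε*t)) (ε / (1+ε*x)) x := by
    simpa using (((hasDerivAt_id x).const_mul ε).const_add 1).log h2.ne'
  have d3 : HasDerivAt (fun t : ℝ => (1+t)⁻¹) (-1 / (1+x)^2) x := by
    exact ((hasDerivAt_id' x).const_add 1).inv h1.ne'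
  have : HasDerivAt (fun t : ℝ => ε/(1-ε)^2 * (Real.log (1+t) - Real.log (1+ε*t))
      + ε/(1-ε) * (1+t)⁻¹) _ x :=
    ((d1.sub d2).const_mul (ε/(1-ε)^2)).add (d3.const_mul (ε/(1-ε)))
  convert this using 1
  have hne : (1:ℝ) - ε ≠ 0 := by linarith
  field_simp
  ring

lemma aux_outer (ε c : ℝ) (hε : 0 < ε) (hε1 : ε < 1) (hc : 0 ≤ c) :
    ∫ x in Ioi c, (1+x)⁻¹ ^ 2 * (1 - (1+ε*x)⁻¹)
      = ε/(1-ε)^2 * (Real.log (1+ε*c) - Real.log (1+c) - Real.log ε)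
        - ε/((1-ε)*(1+c)) := by
  have h1c : (0:ℝ) < 1 + c := by linarith
  have key := integral_Ioi_of_hasDerivAt_of_nonneg'
    (g := fun t : ℝ => ε/(1-ε)^2 * (Real.log (1+t) - Real.log (1+ε*t))
        + ε/(1-ε) * (1+t)⁻¹)
    (g' := fun t : ℝ => (1+t)⁻¹ ^ 2 * (1 - (1+ε*t)⁻¹))
    (a := c) (l := ε/(1-ε)^2 * (- Real.log ε))
    (fun x hx => hd_G ε c x hε hε1 hc hx)
    ?_ ?_
  · rw [key]
    field_simp
    ring
  · intro x hx
    have hx0 : 0 < x := lt_of_le_of_lt hc hx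
    have h2 : (1:ℝ) ≤ 1 + ε * x := by nlinarith
    have h3 : (1+ε*x)⁻¹ ≤ 1 := by
      rw [inv_le_one_iff₀]; right; exact h2
    have := sub_nonneg.mpr h3
    positivity
  · have hlim1 : Tendsto (fun t : ℝ => Real.log (1+t) - Real.log (1+ε*t)) atTop
        (𝓝 (- Real.log ε)) := by
      have hev : ∀ᶠ t : ℝ in atTop, Real.log ((1+t)/(1+ε*t))
          = Real.log (1+t) - Real.log (1+ε*t) := by
        filter_upwards [eventually_gt_atTop (0:ℝ)] with t ht
        exact Real.log_div (by nlinarith) (by nlinarith)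
      refine Tendsto.congr' hev ?_
      have hq : Tendsto (fun t : ℝ => (1+t)/(1+ε*t)) atTop (𝓝 ε⁻¹) := by
        have hev2 : ∀ᶠ t : ℝ in atTop, (t⁻¹ + 1)/(t⁻¹ + ε) = (1+t)/(1+ε*t) := by
          filter_upwards [eventually_gt_atTop (0:ℝ)] with t ht
          rw [div_eq_div_iff (by positivity) (by nlinarith)]
          field_simp
        refine Tendsto.congr' hev2 ?_
        have h0 : Tendsto (fun t : ℝ => t⁻¹) atTop (𝓝 0) := tendsto_inv_atTop_zero
        have := (h0.add_const 1).div (h0.add_const ε) (by simp [hε.ne'])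
        simpa [one_div, Pi.div_def] using this
      have hcont : ContinuousAt Real.log ε⁻¹ :=
        Real.continuousAt_log (by positivity)
      have := hcont.tendsto.comp hq
      simpa [Real.log_inv, Function.comp_def] using this
    have hlim2 : Tendsto (fun t : ℝ => (1+t)⁻¹) atTop (𝓝 0) := by
      apply Tendsto.comp tendsto_inv_atTop_zero
      exact tendsto_atTop_add_const_left _ 1 tendsto_id
    have := (hlim1.const_mul (ε/(1-ε)^2)).add (hlim2.const_mul (ε/(1-ε)))
    simpa using this

/-! ### The 2-dimensional integral over a strip of the cone -/

def coneStrip (ε c : ℝ) : Set (ℝ × ℝ) :=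
  {p : ℝ × ℝ | c < p.1 ∧ 0 < p.2 ∧ p.2 ≤ ε * p.1}

lemma coneStrip_measurable (ε c : ℝ) : MeasurableSet (coneStrip ε c) := by
  apply MeasurableSet.inter (measurableSet_lt measurable_const measurable_fst)
  exact MeasurableSet.inter (measurableSet_lt measurable_const measurable_snd)
    (measurableSet_le measurable_snd (measurable_fst.const_mul ε))

lemma pareto_measurable : Measurable paretoDensity := by
  unfold paretoDensity
  exact (((measurable_const.add measurable_fst).inv.pow_const 2).mul
    ((measurable_const.add measurable_snd).inv.pow_const 2))

lemma pareto_nonneg (x : ℝ × ℝ) : 0 ≤ paretoDensity x := by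
  unfold paretoDensity; positivity

lemma indicator_integrable (ε c : ℝ) (hc : 0 ≤ c) :
    Integrable ((coneStrip ε c).indicator paretoDensity)
      ((volume : Measure ℝ).prod (volume : Measure ℝ)) := by
  set g : ℝ → ℝ := (Ioi (0:ℝ)).indicator (fun x => (1+x)⁻¹ ^ 2) with hg
  have hgint : Integrable g (volume : Measure ℝ) :=
    (integrable_indicator_iff measurableSet_Ioi).mpr integrableOn_inv_sq
  have hφ : Integrable (fun z : ℝ × ℝ => g z.1 * g z.2)
      ((volume : Measure ℝ).prod (volume : Measure ℝ)) := hgint.mul_prod hgint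
  refine hφ.mono' ?_ (Filter.Eventually.of_forall ?_)
  · exact (pareto_measurable.indicator (coneStrip_measurable ε c)).aestronglyMeasurable
  · intro z
    by_cases hz : z ∈ coneStrip ε c
    · rw [Set.indicator_of_mem hz]
      obtain ⟨h1, h2, _⟩ := hz
      have hz1 : 0 < z.1 := lt_of_le_of_lt hc h1
      rw [Real.norm_of_nonneg (pareto_nonneg z), hg]
      simp only [Set.indicator_apply, Set.mem_Ioi, hz1, h2, if_true]
      exact le_of_eq rfl
    · rw [Set.indicator_of_notMem hz]
      simp only [norm_zero]
      apply mul_nonneg <;> (apply Set.indicator_nonneg; intro x _; positivity)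

lemma strip_integrableOn (ε c : ℝ) (hc : 0 ≤ c) :
    IntegrableOn paretoDensity (coneStrip ε c) := by
  have := indicator_integrable ε c hc
  rw [← MeasureTheory.Measure.volume_eq_prod] at this
  exact (integrable_indicator_iff (coneStrip_measurable ε c)).mp this

lemma strip_integral_iter (ε c : ℝ) (hε : 0 < ε) (hc : 0 ≤ c) :
    ∫ x in coneStrip ε c, paretoDensity x
      = ∫ x in Ioi c, (1+x)⁻¹ ^ 2 * (1 - (1+ε*x)⁻¹) := by
  rw [← MeasureTheory.integral_indicator (coneStrip_measurable ε c)]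
  rw [MeasureTheory.Measure.volume_eq_prod]
  rw [MeasureTheory.integral_prod _ (indicator_integrable ε c hc)]
  rw [← MeasureTheory.integral_indicator measurableSet_Ioi]
  congr 1
  funext x
  by_cases hx : x ∈ Ioi c
  · have hx0 : 0 < x := lt_of_le_of_lt hc hx
    rw [Set.indicator_of_mem hx]
    have h : (fun y => (coneStrip ε c).indicator paretoDensity (x, y))
        = (Ioc 0 (ε*x)).indicator (fun y => (1+x)⁻¹ ^ 2 * (1+y)⁻¹ ^ 2) := by
      funext y
      by_cases hy : y ∈ Ioc 0 (ε*x)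
      · rw [Set.indicator_of_mem hy,
          Set.indicator_of_mem (show (x,y) ∈ coneStrip ε c from ⟨hx, hy.1, hy.2⟩)]
        rfl
      · rw [Set.indicator_of_notMem hy, Set.indicator_of_notMem]
        intro hmem
        exact hy ⟨hmem.2.1, hmem.2.2⟩
    rw [h, MeasureTheory.integral_indicator measurableSet_Ioc,
      MeasureTheory.integral_const_mul, aux_inner (ε*x) (by positivity)]
  · rw [Set.indicator_of_notMem hx]
    have h : (fun y => (coneStrip ε c).indicator paretoDensity (x, y)) = fun _ => 0 := by
      funext y
      apply Set.indicator_of_notMem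
      intro hmem
      exact hx hmem.1
    rw [h, integral_zero]

lemma strip_integral (ε c : ℝ) (hε : 0 < ε) (hε1 : ε < 1) (hc : 0 ≤ c) :
    ∫ x in coneStrip ε c, paretoDensity x
      = ε/(1-ε)^2 * (Real.log (1+ε*c) - Real.log (1+c) - Real.log ε)
        - ε/((1-ε)*(1+c)) := by
  rw [strip_integral_iter ε c hε hc]
  exact aux_outer ε c hε hε1 hc

/-! ### Set identities -/

lemma cone_eq (ε : ℝ) : coneSublevel ε = coneStrip ε 0 := rfl

lemma cone_inter_compl (C ε : ℝ) (hC : 0 < C) (hε : 0 < ε) (hε1 : ε < 1) :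
    coneSublevel ε ∩ (Set.Icc (0:ℝ) C ×ˢ Set.Icc (0:ℝ) C)ᶜ = coneStrip ε C := by
  ext p
  simp only [coneSublevel, coneStrip, Set.mem_inter_iff, Set.mem_setOf_eq,
    Set.mem_compl_iff, Set.mem_prod, Set.mem_Icc, not_and, not_le]
  constructor
  · rintro ⟨⟨h1, h2, h3⟩, h4⟩
    refine ⟨?_, h2, h3⟩
    by_contra hle
    push_neg at hle
    have hεx : ε * p.1 < p.1 := by nlinarith
    have := h4 ⟨h1.le, hle⟩ h2.le
    linarith
  · rintro ⟨h1, h2, h3⟩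
    exact ⟨⟨lt_trans hC h1, h2, h3⟩, fun h _ => by linarith [h.2]⟩

lemma cone_integral_pos (ε : ℝ) (hε : 0 < ε) (hε1 : ε < 1) :
    0 < ∫ x in coneSublevel ε, paretoDensity x := by
  rw [cone_eq, strip_integral ε 0 hε hε1 le_rfl]
  have hlog : Real.log ε < ε - 1 := Real.log_lt_sub_one_of_pos hε (ne_of_lt hε1)
  have h1e : (0:ℝ) < 1 - ε := by linarith
  simp only [mul_zero, add_zero, Real.log_one]
  have h : ε/(1-ε)^2 * (0 - 0 - Real.log ε) - ε/((1-ε)*1)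
      = ε/(1-ε)^2 * (-(1 - ε + Real.log ε)) := by
    field_simp
    ring
  rw [h]
  exact mul_pos (by positivity) (by linarith)

/-! ### The three parts -/

lemma part1 (C : ℝ) (hC : 0 < C) (ε : ℝ) (hε : 0 < ε) (hε1 : ε < 1) :
    (∫ x in coneSublevel ε ∩ (Set.Icc (0:ℝ) C ×ˢ Set.Icc (0:ℝ) C)ᶜ, paretoDensity x) /
        (∫ x in coneSublevel ε, paretoDensity x) =
      (1 - ε - (1 + C) * Real.log ((1 + C * ε) / (ε + C * ε))) /
        ((1 + C) * (1 - ε + Real.log ε)) := by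
  rw [cone_inter_compl C ε hC hε hε1, cone_eq,
    strip_integral ε C hε hε1 hC.le, strip_integral ε 0 hε hε1 le_rfl]
  have h1e : (0:ℝ) < 1 - ε := by linarith
  have h1C : (0:ℝ) < 1 + C := by linarith
  have hlog : Real.log ε < ε - 1 := by
    have := Real.log_lt_sub_one_of_pos hε (ne_of_lt hε1)
    linarith
  have hden : 1 - ε + Real.log ε < 0 := by linarith
  have hexp : Real.log ((1 + C * ε) / (ε + C * ε))
      = Real.log (1 + ε * C) - Real.log ε - Real.log (1 + C) := by
    rw [Real.log_div (by nlinarith) (by nlinarith),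
      show ε + C * ε = ε * (1 + C) by ring,
      Real.log_mul hε.ne' h1C.ne', show 1 + C * ε = 1 + ε * C by ring]
    ring
  rw [hexp]
  simp only [mul_zero, add_zero, Real.log_one]
  have hI : ε/(1-ε)^2 * (0 - 0 - Real.log ε) - ε/((1-ε)*1)
      = ε/(1-ε)^2 * (-(1 - ε + Real.log ε)) := by
    field_simp
    ring
  rw [hI]
  have hIne : ε/(1-ε)^2 * (-(1 - ε + Real.log ε)) ≠ 0 :=
    ne_of_gt (mul_pos (by positivity) (by linarith))
  have hdenne : (1 + C) * (1 - ε + Real.log ε) ≠ 0 :=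
    mul_ne_zero h1C.ne' (ne_of_lt hden)
  rw [div_eq_div_iff hIne hdenne]
  field_simp
  ring

lemma part2 (C : ℝ) (hC : 0 < C) :
    Tendsto (fun ε : ℝ =>
        (∫ x in coneSublevel ε ∩ (Set.Icc (0:ℝ) C ×ˢ Set.Icc (0:ℝ) C)ᶜ, paretoDensity x) /
          (∫ x in coneSublevel ε, paretoDensity x))
      (𝓝[>] (0:ℝ)) (𝓝 1) := by
  have h1C : (0:ℝ) < 1 + C := by linarith
  set t : ℝ → ℝ := fun ε => (Real.log ε)⁻¹ with ht
  have htt : Tendsto t (𝓝[>] (0:ℝ)) (𝓝 0) := by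
    have h2 : Tendsto (fun ε : ℝ => -Real.log ε) (𝓝[>] (0:ℝ)) atTop :=
      tendsto_neg_atBot_atTop.comp Real.tendsto_log_nhdsGT_zero
    have h3 := h2.inv_tendsto_atTop
    have h4 := h3.neg
    simp only [Pi.inv_apply, Pi.neg_apply] at h3 h4 ⊢
    rw [ht]
    convert h4 using 2 with ε
    · rw [inv_neg, neg_neg]
    · rw [neg_zero]
  have hone : Tendsto (fun ε : ℝ => 1 - ε) (𝓝[>] (0:ℝ)) (𝓝 1) := by
    have h : Tendsto (fun ε : ℝ => 1 - ε) (𝓝 (0:ℝ)) (𝓝 (1 - 0)) :=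
      (continuous_const.sub continuous_id).tendsto 0
    simpa using h.mono_left nhdsWithin_le_nhds
  have hL1 : Tendsto (fun ε : ℝ => Real.log (1 + C * ε)) (𝓝[>] (0:ℝ)) (𝓝 0) := by
    have h1 : Tendsto (fun ε : ℝ => 1 + C * ε) (𝓝 (0:ℝ)) (𝓝 1) := by
      have h : Tendsto (fun ε : ℝ => 1 + C * ε) (𝓝 (0:ℝ)) (𝓝 (1 + C * 0)) :=
        (continuous_const.add (continuous_const.mul continuous_id)).tendsto 0
      simpa using h
    have := (Real.continuousAt_log one_ne_zero).tendsto.comp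
      (h1.mono_left (nhdsWithin_le_nhds (s := Ioi (0:ℝ))))
    simpa [Function.comp_def] using this
  have hF : Tendsto (fun ε : ℝ => (1-ε) * t ε
      - (1+C) * (Real.log (1+C*ε) * t ε - 1 - Real.log (1+C) * t ε))
      (𝓝[>] (0:ℝ)) (𝓝 (1+C)) := by
    have hinner : Tendsto (fun ε : ℝ => Real.log (1+C*ε) * t ε - 1 - Real.log (1+C) * t ε)
        (𝓝[>] (0:ℝ)) (𝓝 (0*0 - 1 - Real.log (1+C) * 0)) :=
      ((hL1.mul htt).sub tendsto_const_nhds).sub (htt.const_mul _)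
    have h := (hone.mul htt).sub (hinner.const_mul (1+C))
    have hval : 1*0 - (1+C) * (0*0 - 1 - Real.log (1+C) * 0) = 1 + C := by ring
    rw [hval] at h
    exact h
  have hD : Tendsto (fun ε : ℝ => (1+C) * ((1-ε) * t ε + 1))
      (𝓝[>] (0:ℝ)) (𝓝 (1+C)) := by
    have h := ((hone.mul htt).add_const 1).const_mul (1+C)
    have hval : (1+C) * (1*0 + 1) = 1 + C := by ring
    rw [hval] at h
    exact h
  have hdiv := hF.div hD h1C.ne'
  rw [div_self h1C.ne'] at hdiv
  refine Tendsto.congr' ?_ hdiv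
  filter_upwards [Ioo_mem_nhdsGT_of_mem (show (0:ℝ) ∈ Ico 0 1 by norm_num)] with ε hε
  have hε0 := hε.1
  have hε1 := hε.2
  have hlogne : Real.log ε ≠ 0 := ne_of_lt (Real.log_neg hε0 hε1)
  simp only [Pi.div_apply]
  rw [part1 C hC ε hε0 hε1]
  have hexp : Real.log ((1 + C * ε) / (ε + C * ε))
      = Real.log (1 + C * ε) - Real.log ε - Real.log (1 + C) := by
    rw [Real.log_div (by nlinarith) (by nlinarith),
      show ε + C * ε = ε * (1 + C) by ring,
      Real.log_mul hε0.ne' h1C.ne']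
    ring
  rw [hexp]
  have hlt : Real.log ε * t ε = 1 := by
    rw [ht]; field_simp
  have hFn : (1-ε) * t ε - (1+C) * (Real.log (1+C*ε) * t ε - 1 - Real.log (1+C) * t ε)
      = (1 - ε - (1 + C) * (Real.log (1 + C * ε) - Real.log ε - Real.log (1 + C))) * t ε := by
    nlinarith [hlt]
  have hDn : (1+C) * ((1-ε) * t ε + 1) = ((1 + C) * (1 - ε + Real.log ε)) * t ε := by
    nlinarith [hlt]
  rw [hFn, hDn, mul_div_mul_right _ _ (show t ε ≠ 0 by rw [ht]; exact inv_ne_zero hlogne)]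

/-- The mass of a on Mᵉ outside the compact square [0,C]², the explicit formula for its ratio
to the total mass on Mᵉ, the fact that the ratio tends to 1 as ε ↓ 0, and the resulting
failure of tightness of the family {Pᵉ}. -/
theorem pareto_cone_not_tight :
    (∀ C : ℝ, 0 < C → ∀ ε : ℝ, 0 < ε → ε < 1 →
      (∫ x in coneSublevel ε ∩ (Set.Icc (0:ℝ) C ×ˢ Set.Icc (0:ℝ) C)ᶜ, paretoDensity x) /
          (∫ x in coneSublevel ε, paretoDensity x) =
        (1 - ε - (1 + C) * Real.log ((1 + C * ε) / (ε + C * ε))) /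
          ((1 + C) * (1 - ε + Real.log ε))) ∧
    (∀ C : ℝ, 0 < C →
      Tendsto (fun ε : ℝ =>
          (∫ x in coneSublevel ε ∩ (Set.Icc (0:ℝ) C ×ˢ Set.Icc (0:ℝ) C)ᶜ, paretoDensity x) /
            (∫ x in coneSublevel ε, paretoDensity x))
        (nhdsWithin 0 (Set.Ioi 0)) (nhds 1)) ∧
    ¬ (∀ δ : ℝ, 0 < δ → ∃ K : Set (ℝ × ℝ), IsCompact K ∧
        ∀ ε : ℝ, 0 < ε → ε < 1 → 1 - ENNReal.ofReal δ ≤ Pcone ε K) := by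
  refine ⟨part1, part2, ?_⟩
  intro h
  obtain ⟨K, hK, hbound⟩ := h (1/2) (by norm_num)
  obtain ⟨B, hB⟩ := isBounded_iff_forall_norm_le.mp hK.isBounded
  set C : ℝ := max B 1 with hCdef
  have hC : (0:ℝ) < C := lt_of_lt_of_le one_pos (le_max_right _ _)
  -- pick ε with ratio > 3/4
  have hev1 : ∀ᶠ ε : ℝ in 𝓝[>] (0:ℝ), (3/4 : ℝ) <
      (∫ x in coneSublevel ε ∩ (Set.Icc (0:ℝ) C ×ˢ Set.Icc (0:ℝ) C)ᶜ, paretoDensity x) /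
        (∫ x in coneSublevel ε, paretoDensity x) :=
    (part2 C hC).eventually (eventually_gt_nhds (by norm_num))
  have hev2 : Ioo (0:ℝ) 1 ∈ 𝓝[>] (0:ℝ) :=
    Ioo_mem_nhdsGT_of_mem (show (0:ℝ) ∈ Ico 0 1 by norm_num)
  obtain ⟨ε, hgt, hεIoo⟩ := (hev1.and (eventually_of_mem hev2 (fun x hx => hx))).exists
  obtain ⟨hε0, hε1⟩ := hεIoo
  set sq : Set (ℝ × ℝ) := Set.Icc (0:ℝ) C ×ˢ Set.Icc (0:ℝ) C with hsq
  have hsqMeas : MeasurableSet sq := (measurableSet_Icc.prod measurableSet_Icc)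
  have hconeMeas : MeasurableSet (coneSublevel ε) := by
    rw [cone_eq]; exact coneStrip_measurable ε 0
  have hfi : IntegrableOn paretoDensity (coneSublevel ε) := by
    rw [cone_eq]; exact strip_integrableOn ε 0 le_rfl
  set I : ℝ := ∫ x in coneSublevel ε, paretoDensity x with hIdef
  set Jout : ℝ := ∫ x in coneSublevel ε ∩ sqᶜ, paretoDensity x with hJoutdef
  set Jsq : ℝ := ∫ x in coneSublevel ε ∩ sq, paretoDensity x with hJsqdef
  have hIpos : 0 < I := cone_integral_pos ε hε0 hε1
  have hsplit : I = Jsq + Jout := by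
    rw [hIdef, hJsqdef, hJoutdef, ← MeasureTheory.setIntegral_union
      (disjoint_compl_right.mono inter_subset_right inter_subset_right)
      (hconeMeas.inter hsqMeas.compl)
      (hfi.mono_set inter_subset_left) (hfi.mono_set inter_subset_left),
      Set.inter_union_compl]
  -- ratio bound
  have hratio : (3/4 : ℝ) < Jout / I := hgt
  have hJsqI : Jsq / I < 1/4 := by
    have h1 : Jsq / I = 1 - Jout / I := by
      rw [eq_sub_iff_add_eq, ← add_div, ← hsplit, div_self (ne_of_gt hIpos)]
    rw [h1]; linarith
  have hJsqnonneg : 0 ≤ Jsq :=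
    MeasureTheory.setIntegral_nonneg (hconeMeas.inter hsqMeas)
      (fun x _ => pareto_nonneg x)
  -- Pcone bound
  set g : ℝ × ℝ → ENNReal := fun x => ENNReal.ofReal (paretoDensity x) with hg
  set μ' : Measure (ℝ × ℝ) :=
    ((volume : Measure (ℝ × ℝ)).restrict (coneSublevel ε)).withDensity g with hμ'
  have hLtot : ∫⁻ x in coneSublevel ε, g x = ENNReal.ofReal I := by
    rw [hIdef]
    exact (MeasureTheory.ofReal_integral_eq_lintegral_ofReal hfi
      (Filter.Eventually.of_forall (fun x => pareto_nonneg x))).symm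
  have hKsub : K ⊆ sq ∪ (coneSublevel ε)ᶜ := by
    intro x hx
    by_cases hxc : x ∈ coneSublevel ε
    · left
      have hn := hB x hx
      have h1 : x.1 ≤ C := le_trans (le_trans (le_abs_self _)
        (le_trans (by rw [← Real.norm_eq_abs]; exact norm_fst_le x) hn)) (le_max_left _ _)
      have h2 : x.2 ≤ C := le_trans (le_trans (le_abs_self _)
        (le_trans (by rw [← Real.norm_eq_abs]; exact norm_snd_le x) hn)) (le_max_left _ _)
      exact ⟨⟨hxc.1.le, h1⟩, ⟨hxc.2.1.le, h2⟩⟩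
    · right; exact hxc
  have hμ'compl : μ' (coneSublevel ε)ᶜ = 0 := by
    rw [hμ', withDensity_apply _ hconeMeas.compl,
      MeasureTheory.Measure.restrict_restrict hconeMeas.compl,
      Set.compl_inter_self, MeasureTheory.Measure.restrict_empty,
      MeasureTheory.lintegral_zero_measure]
  have hμ'sq : μ' sq = ENNReal.ofReal Jsq := by
    rw [hμ', withDensity_apply _ hsqMeas,
      MeasureTheory.Measure.restrict_restrict hsqMeas, Set.inter_comm, hJsqdef]
    exact (MeasureTheory.ofReal_integral_eq_lintegral_ofReal
      (hfi.mono_set inter_subset_left)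
      (Filter.Eventually.of_forall (fun x => pareto_nonneg x))).symm
  have hμ'K : μ' K ≤ ENNReal.ofReal Jsq := by
    calc μ' K ≤ μ' (sq ∪ (coneSublevel ε)ᶜ) := measure_mono hKsub
    _ ≤ μ' sq + μ' (coneSublevel ε)ᶜ := measure_union_le _ _
    _ = ENNReal.ofReal Jsq := by rw [hμ'sq, hμ'compl, add_zero]
  have hPK : Pcone ε K ≤ ENNReal.ofReal (Jsq / I) := by
    have : Pcone ε K = (ENNReal.ofReal I)⁻¹ * μ' K := by
      rw [Pcone, hLtot]
      rfl
    rw [this, ENNReal.ofReal_div_of_pos hIpos, ENNReal.div_eq_inv_mul]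
    exact mul_le_mul_right hμ'K _
  have hPK4 : Pcone ε K ≤ ENNReal.ofReal (1/4) :=
    le_trans hPK (ENNReal.ofReal_le_ofReal (le_of_lt hJsqI))
  have h12 : (1:ENNReal) - ENNReal.ofReal (1/2) = ENNReal.ofReal (1/2) := by
    rw [← ENNReal.ofReal_one, ← ENNReal.ofReal_sub _ (by norm_num : (0:ℝ) ≤ 1/2)]
    norm_num
  have hlb := hbound ε hε0 hε1
  rw [h12] at hlb
  have : ENNReal.ofReal (1/2) ≤ ENNReal.ofReal (1/4) := le_trans hlb hPK4
  have := (ENNReal.ofReal_le_ofReal_iff (by norm_num)).mp this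
  linarith
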